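/- Let ι be a finite type, E a real normed vector space, and for each p ∈ ι let g_p : E → ℝ be twice continuously differentiable (ContDiff ℝ 2). Define C : (ι → E) → ℝ by C(φ) = ∑_p g_p(φ(p)). Then for all φ, all p ≠ q in ι, and all directions u, v ∈ E, the second derivative of C at φ in the pair of directions (Pi.single p u, Pi.single q v) vanishes: fderiv ℝ (fun ψ => fderiv ℝ C ψ (Pi.single p u)) φ (Pi.single q v) = 0. -/

import Mathlib

theorem hessian_offdiagonal_block_zero
    {ι : Type*} [Fintype ι] [DecidableEq ι]
    {E : Type*} [NormedAddCommGroup E] [NormedSpace ℝ E]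
    (g : ι → E → ℝ) (hg : ∀ p, ContDiff ℝ 2 (g p))
    (φ : ι → E) (p q : ι) (hpq : p ≠ q) (u v : E) :
    fderiv ℝ (fun ψ : ι → E =>
        fderiv ℝ (fun χ : ι → E => ∑ r, g r (χ r)) ψ (Pi.single p u))
      φ (Pi.single q v) = 0 := by
  have hgd : ∀ r, Differentiable ℝ (g r) := fun r => (hg r).differentiable two_ne_zero
  -- Step 1: the inner derivative simplifies pointwise.
  have key : (fun ψ : ι → E =>
      fderiv ℝ (fun χ : ι → E => ∑ r, g r (χ r)) ψ (Pi.single p u))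
      = fun ψ : ι → E => fderiv ℝ (g p) (ψ p) u := by
    funext ψ
    have hterm : ∀ r : ι, HasFDerivAt (fun χ : ι → E => g r (χ r))
        ((fderiv ℝ (g r) (ψ r)).comp (ContinuousLinearMap.proj r)) ψ := by
      intro r
      exact ((hgd r (ψ r)).hasFDerivAt).comp ψ
        ((ContinuousLinearMap.proj r : (ι → E) →L[ℝ] E).hasFDerivAt)
    have hsum : HasFDerivAt (fun χ : ι → E => ∑ r, g r (χ r))
        (∑ r, (fderiv ℝ (g r) (ψ r)).comp (ContinuousLinearMap.proj r)) ψ :=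
      HasFDerivAt.fun_sum (fun r _ => hterm r)
    rw [hsum.fderiv]
    rw [ContinuousLinearMap.sum_apply]
    rw [Finset.sum_eq_single p]
    · simp
    · intro r _ hr
      simp [ContinuousLinearMap.proj, Pi.single_eq_of_ne hr]
    · intro h; exact absurd (Finset.mem_univ p) h
  rw [key]
  -- Step 2: the function depends only on ψ p, and (Pi.single q v) p = 0.
  have hF : Differentiable ℝ (fun x : E => fderiv ℝ (g p) x u) := by
    have h1 : ContDiff ℝ 1 (fderiv ℝ (g p)) := (hg p).fderiv_right (le_refl _)
    exact ((ContinuousLinearMap.apply ℝ ℝ u).differentiable).comp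
      (h1.differentiable one_ne_zero)
  have hcomp : HasFDerivAt (fun ψ : ι → E => fderiv ℝ (g p) (ψ p) u)
      ((fderiv ℝ (fun x : E => fderiv ℝ (g p) x u) (φ p)).comp
        (ContinuousLinearMap.proj p)) φ :=
    ((hF (φ p)).hasFDerivAt).comp (g := fun x : E => fderiv ℝ (g p) x u) φ
      ((ContinuousLinearMap.proj p : (ι → E) →L[ℝ] E).hasFDerivAt)
  rw [hcomp.fderiv]
  simp only [ContinuousLinearMap.comp_apply, ContinuousLinearMap.proj_apply,
    Pi.single_eq_of_ne hpq, map_zero]
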